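/- Let p ≥ 2 be a natural number, ε > 0, and α ∈ (0,1). Define h(t,x) = 1 - (2ε)^{p-1}·(p-1)·t·(log(6/(x-t)))^{α(p-1)} and θ(t,x) = 2ε·(log(6/(x-t)))^α · h(t,x)^{-1/(p-1)} on the open set D = {(t,x) ∈ ℝ² : t > 0, 0 < x - t < 2, h(t,x) > 0}. Then θ is continuously differentiable on D, satisfies (∂_t θ + ∂_x θ)(t,x) = θ(t,x)^p for all (t,x) ∈ D, and θ(t,x) → 2ε·(log(6/x₀))^α as (t,x) → (0,x₀) for each x₀ ∈ (0,2). -/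

import Mathlib

open Set Filter

/-- The explicit solution `θ(t,x) = 2ε (log (6/(x-t)))^α h(t,x)^{-1/(p-1)}`, with
`h(t,x) = 1 - (2ε)^{p-1}(p-1) t (log (6/(x-t)))^{α(p-1)}`, is `C¹` on
`D = {(t,x) : t > 0, 0 < x - t < 2, h(t,x) > 0}`, satisfies the transport equation
`∂_t θ + ∂_x θ = θ^p` on `D`, and attains the initial values `2ε (log (6/x₀))^α`
as `(t,x) → (0,x₀)` for `x₀ ∈ (0,2)`. -/
theorem explicit_transport_blowup_solution
    (p : ℕ) (hp : 2 ≤ p) (ε α : ℝ) (hε : 0 < ε) (hα : α ∈ Set.Ioo (0 : ℝ) 1)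
    (h θ : ℝ × ℝ → ℝ)
    (hh : ∀ q : ℝ × ℝ, h q =
      1 - (2 * ε) ^ (p - 1) * ((p : ℝ) - 1) * q.1
        * Real.log (6 / (q.2 - q.1)) ^ (α * ((p : ℝ) - 1)))
    (hθ : ∀ q : ℝ × ℝ, θ q =
      2 * ε * Real.log (6 / (q.2 - q.1)) ^ α * h q ^ (-(1 / ((p : ℝ) - 1))))
    (D : Set (ℝ × ℝ))
    (hD : D = {q : ℝ × ℝ | 0 < q.1 ∧ q.2 - q.1 ∈ Set.Ioo (0 : ℝ) 2 ∧ 0 < h q}) :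
    ContDiffOn ℝ 1 θ D ∧
    (∀ q ∈ D, fderiv ℝ θ q (1, 1) = θ q ^ p) ∧
    (∀ x₀ ∈ Set.Ioo (0 : ℝ) 2,
      Filter.Tendsto θ (nhdsWithin ((0 : ℝ), x₀) D)
        (nhds (2 * ε * Real.log (6 / x₀) ^ α))) := by
  obtain ⟨hα0, hα1⟩ := hα
  have hpnat : 1 < p := lt_of_lt_of_le one_lt_two hp
  have hp1 : (1 : ℝ) < (p : ℝ) := by exact_mod_cast hpnat
  have hps : (0 : ℝ) < (p : ℝ) - 1 := by linarith
  have hps' : ((p : ℝ) - 1) ≠ 0 := ne_of_gt hps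
  -- positivity of the logarithm on the relevant strip
  have hLpos : ∀ q : ℝ × ℝ, q.2 - q.1 ∈ Set.Ioo (0 : ℝ) 2 →
      0 < Real.log (6 / (q.2 - q.1)) := by
    rintro q ⟨h1, h2⟩
    apply Real.log_pos
    rw [lt_div_iff₀ h1]; linarith
  -- smoothness of the log factor
  have hLcd : ∀ q : ℝ × ℝ, q.2 - q.1 ∈ Set.Ioo (0 : ℝ) 2 →
      ContDiffAt ℝ 1 (fun w : ℝ × ℝ => Real.log (6 / (w.2 - w.1))) q := by
    rintro q hq
    obtain ⟨h1, h2⟩ := hq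
    have hsub : ContDiffAt ℝ 1 (fun w : ℝ × ℝ => w.2 - w.1) q :=
      (contDiff_snd.sub contDiff_fst).contDiffAt
    have hdiv : ContDiffAt ℝ 1 (fun w : ℝ × ℝ => 6 / (w.2 - w.1)) q :=
      contDiffAt_const.div hsub (ne_of_gt h1)
    exact hdiv.log (by positivity)
  -- smoothness of h
  have hhcd : ∀ q : ℝ × ℝ, q.2 - q.1 ∈ Set.Ioo (0 : ℝ) 2 → ContDiffAt ℝ 1 h q := by
    intro q hq
    have hhf : h = fun w : ℝ × ℝ =>
        1 - (2 * ε) ^ (p - 1) * ((p : ℝ) - 1) * w.1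
          * Real.log (6 / (w.2 - w.1)) ^ (α * ((p : ℝ) - 1)) := funext hh
    rw [hhf]
    exact contDiffAt_const.sub
      (((contDiffAt_const.mul contDiffAt_const).mul contDiffAt_fst).mul
        ((hLcd q hq).rpow_const_of_ne (ne_of_gt (hLpos q hq))))
  -- smoothness of θ
  have hθcd : ∀ q : ℝ × ℝ, q.2 - q.1 ∈ Set.Ioo (0 : ℝ) 2 → 0 < h q →
      ContDiffAt ℝ 1 θ q := by
    intro q hq hhq
    have hθf : θ = fun w : ℝ × ℝ =>
        2 * ε * Real.log (6 / (w.2 - w.1)) ^ α * h w ^ (-(1 / ((p : ℝ) - 1))) :=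
      funext hθ
    rw [hθf]
    exact ((contDiffAt_const.mul
      ((hLcd q hq).rpow_const_of_ne (ne_of_gt (hLpos q hq)))).mul
      ((hhcd q hq).rpow_const_of_ne (ne_of_gt hhq)))
  refine ⟨?_, ?_, ?_⟩
  · -- C¹ on D
    intro q hq
    rw [hD] at hq
    exact (hθcd q hq.2.1 hq.2.2).contDiffWithinAt
  · -- transport equation
    intro q hq
    rw [hD] at hq
    obtain ⟨hq1, hq2, hq3⟩ := hq
    have hL : 0 < Real.log (6 / (q.2 - q.1)) := hLpos q hq2
    set L : ℝ := Real.log (6 / (q.2 - q.1)) with hLdef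
    set K : ℝ := (2 * ε) ^ (p - 1) * ((p : ℝ) - 1) * L ^ (α * ((p : ℝ) - 1)) with hKdef
    have hdiff : DifferentiableAt ℝ θ q := (hθcd q hq2 hq3).differentiableAt one_ne_zero
    -- the line s ↦ (q.1 + s, q.2 + s)
    have hline : HasDerivAt (fun s : ℝ => ((q.1 + s, q.2 + s) : ℝ × ℝ)) (1, 1) 0 :=
      ((hasDerivAt_id 0).const_add q.1).prodMk ((hasDerivAt_id 0).const_add q.2)
    have hq0 : ((q.1 + 0, q.2 + 0) : ℝ × ℝ) = q := by simp
    have h1 : HasDerivAt (fun s : ℝ => θ (q.1 + s, q.2 + s)) (fderiv ℝ θ q (1, 1)) 0 := by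
      have hF : HasFDerivAt θ (fderiv ℝ θ q) ((q.1 + 0, q.2 + 0) : ℝ × ℝ) := by
        rw [hq0]; exact hdiff.hasFDerivAt
      exact hF.comp_hasDerivAt 0 hline
    -- value of h along the line
    have hbase : ∀ s : ℝ, h (q.1 + s, q.2 + s) = 1 - K * (q.1 + s) := by
      intro s
      rw [hh]
      simp only [hKdef, hLdef, add_sub_add_right_eq_sub]
      ring
    have hfun : (fun s : ℝ => θ (q.1 + s, q.2 + s)) =
        fun s : ℝ => 2 * ε * L ^ α * (1 - K * (q.1 + s)) ^ (-(1 / ((p : ℝ) - 1))) := by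
      funext s
      rw [hθ, hbase]
      simp only [hLdef, add_sub_add_right_eq_sub]
    have hval0 : (1 : ℝ) - K * (q.1 + 0) = h q := by
      rw [← hbase 0, hq0]
    have hne0 : (1 : ℝ) - K * (q.1 + 0) ≠ 0 := by rw [hval0]; exact ne_of_gt hq3
    have hu : HasDerivAt (fun s : ℝ => 1 - K * (q.1 + s)) (-K) 0 := by
      have := (((hasDerivAt_id (0:ℝ)).const_add q.1).const_mul K).const_sub 1
      simpa using this
    have h2 : HasDerivAt (fun s : ℝ => θ (q.1 + s, q.2 + s))
        (2 * ε * L ^ α * (-K * (-(1 / ((p : ℝ) - 1))) *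
          (1 - K * (q.1 + 0)) ^ (-(1 / ((p : ℝ) - 1)) - 1))) 0 := by
      rw [hfun]
      exact (hu.rpow_const (Or.inl hne0)).const_mul (2 * ε * L ^ α)
    have heq := h1.unique h2
    rw [heq, hval0, hθ q]
    -- now pure algebra with rpow
    have hH : 0 < h q := hq3
    have e2ε : (0:ℝ) < 2 * ε := by linarith
    rw [mul_pow, mul_pow, ← Real.rpow_natCast (h q ^ _) p, ← Real.rpow_mul hH.le,
      ← Real.rpow_natCast (L ^ α) p, ← Real.rpow_mul hL.le]
    have eexp : -(1 / ((p : ℝ) - 1)) - 1 = -(1 / ((p : ℝ) - 1)) * (p : ℝ) := by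
      field_simp
      ring
    have eL : L ^ α * L ^ (α * ((p : ℝ) - 1)) = L ^ (α * (p : ℝ)) := by
      rw [← Real.rpow_add hL]; ring_nf
    have epow : (2 * ε) * (2 * ε) ^ (p - 1) = (2 * ε) ^ p := by
      rw [← pow_succ']
      congr 1
      omega
    rw [eexp, hKdef]
    calc 2 * ε * L ^ α * (-((2 * ε) ^ (p - 1) * ((p : ℝ) - 1) * L ^ (α * ((p : ℝ) - 1))) *
            (-(1 / ((p : ℝ) - 1))) * h q ^ (-(1 / ((p : ℝ) - 1)) * (p : ℝ)))
        = ((2 * ε) * (2 * ε) ^ (p - 1)) * (L ^ α * L ^ (α * ((p : ℝ) - 1))) *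
            (((p : ℝ) - 1) * (1 / ((p : ℝ) - 1))) *
            h q ^ (-(1 / ((p : ℝ) - 1)) * (p : ℝ)) := by ring
      _ = (2 * ε) ^ p * L ^ (α * (p : ℝ)) * h q ^ (-(1 / ((p : ℝ) - 1)) * (p : ℝ)) := by
            rw [epow, eL, mul_one_div, div_self hps', mul_one]
      _ = (2 * ε) ^ p * L ^ (α * ↑p) * h q ^ (-(1 / ((p : ℝ) - 1)) * ↑p) := by norm_num
  · -- initial values
    intro x₀ hx₀
    obtain ⟨hx1, hx2⟩ := hx₀
    have hmem : ((0 : ℝ), x₀).2 - ((0 : ℝ), x₀).1 ∈ Set.Ioo (0 : ℝ) 2 := by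
      simpa using ⟨hx1, hx2⟩
    have hcont : ContinuousAt θ ((0 : ℝ), x₀) := by
      have hh0 : h ((0 : ℝ), x₀) = 1 := by rw [hh]; simp
      exact ((hθcd ((0:ℝ), x₀) hmem (by rw [hh0]; norm_num)).continuousAt)
    have hval : θ ((0 : ℝ), x₀) = 2 * ε * Real.log (6 / x₀) ^ α := by
      rw [hθ]
      have hh0 : h ((0 : ℝ), x₀) = 1 := by rw [hh]; simp
      rw [hh0]
      simp [Real.one_rpow]
    have := hcont.tendsto
    rw [hval] at this
    exact this.mono_left nhdsWithin_le_nhds
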